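/- A simplicial complex Δ on [n] with frame dimension c-1 satisfies: any two distinct facets intersect in a set of cardinality less than c if and only if H̃_0(lk_Δ S) = 0 for all faces S with |S| ≥ c (equivalently, every link lk_Δ S with |S| ≥ c is a simplex). -/

import Mathlib

open Finset

namespace SCx

variable (k : Type) [Field k] {n : ℕ}

/-- An (abstract) simplicial complex on the vertex set `Fin n`:
a set of finsets closed under taking subsets. -/
def IsComplex (Δ : Set (Finset (Fin n))) : Prop :=
  ∀ F ∈ Δ, ∀ G ⊆ F, G ∈ Δ

/-- Simplicial `p`-chains with coefficients in `k`: functions on the faces of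
cardinality `p+1`. -/
abbrev Chains (Δ : Set (Finset (Fin n))) (p : ℤ) : Type :=
  {F : Finset (Fin n) // F ∈ Δ ∧ (F.card : ℤ) = p + 1} → k

open Classical in
/-- The underlying function of the simplicial boundary map, written via its
transpose formula:
`(∂ f) G = ∑_{x : insert x G ∈ Δ} (-1)^{pos of x in insert x G} f (insert x G)`. -/
noncomputable def boundaryFun (Δ : Set (Finset (Fin n))) (p : ℤ)
    (f : Chains k Δ p) : Chains k Δ (p - 1) := fun G => ∑ x : Fin n,
  if h : x ∉ G.1 ∧ insert x G.1 ∈ Δ then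
    (-1 : k) ^ (G.1.filter (fun y => y < x)).card *
      f ⟨insert x G.1, h.2, by
        have hc := G.2.2
        rw [Finset.card_insert_of_notMem h.1]
        push_cast at hc ⊢
        omega⟩
  else 0

/-- The simplicial boundary map. -/
noncomputable def boundary (Δ : Set (Finset (Fin n))) (p : ℤ) :
    Chains k Δ p →ₗ[k] Chains k Δ (p - 1) where
  toFun := boundaryFun k Δ p
  map_add' f g := by
    funext G
    unfold boundaryFun
    rw [Pi.add_apply]
    rw [← Finset.sum_add_distrib]
    refine Finset.sum_congr rfl fun x _ => ?_
    split_ifs with h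
    · rw [Pi.add_apply]; ring
    · rw [add_zero]
  map_smul' c f := by
    funext G
    unfold boundaryFun
    simp only [RingHom.id_apply, Pi.smul_apply, smul_eq_mul, Finset.mul_sum]
    refine Finset.sum_congr rfl fun x _ => ?_
    split_ifs with h
    · ring
    · rw [mul_zero]

/-- Transport of chains along an equality of degrees. -/
noncomputable def chainsCongr (Δ : Set (Finset (Fin n))) {p q : ℤ} (h : p = q) :
    Chains k Δ p ≃ₗ[k] Chains k Δ q := by
  subst h; exact LinearEquiv.refl k _

noncomputable def cycles (Δ : Set (Finset (Fin n))) (p : ℤ) : Submodule k (Chains k Δ p) :=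
  LinearMap.ker (boundary k Δ p)

noncomputable def boundaries (Δ : Set (Finset (Fin n))) (p : ℤ) : Submodule k (Chains k Δ p) :=
  LinearMap.range ((chainsCongr k Δ (show p + 1 - 1 = p by ring)).toLinearMap ∘ₗ
    boundary k Δ (p + 1))

/-- Reduced simplicial homology of `Δ` in degree `p`, with coefficients in the field `k`,
defined as cycles modulo (boundaries intersected with cycles).  With this convention
`H̃_{-1}({∅}) = k`. -/
abbrev ReducedHomology (Δ : Set (Finset (Fin n))) (p : ℤ) :=
  ↥(cycles k Δ p) ⧸ (Submodule.comap (cycles k Δ p).subtype (boundaries k Δ p))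

/-- The Alexander dual of `Δ`. -/
def dual (Δ : Set (Finset (Fin n))) : Set (Finset (Fin n)) := {F | Fᶜ ∉ Δ}

/-- The restriction `Δ_R` of `Δ` to a vertex subset `R`. -/
def restrict (Δ : Set (Finset (Fin n))) (R : Finset (Fin n)) : Set (Finset (Fin n)) :=
  {F | F ∈ Δ ∧ F ⊆ R}

/-- The link `lk_Δ S`. -/
def link (Δ : Set (Finset (Fin n))) (S : Finset (Fin n)) : Set (Finset (Fin n)) :=
  {F | Disjoint F S ∧ F ∪ S ∈ Δ}

/-- `Δ_R^{S,T} = {F ⊆ R : F ∪ S ∈ Δ}` (for `T` the complement of `R ∪ S`). -/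
def sub (Δ : Set (Finset (Fin n))) (R S : Finset (Fin n)) : Set (Finset (Fin n)) :=
  {F | F ⊆ R ∧ F ∪ S ∈ Δ}

/-- `Δ` has dimension `d - 1`, i.e. `d` is the maximal cardinality of a face. -/
def IsDim (Δ : Set (Finset (Fin n))) (d : ℕ) : Prop :=
  (∀ F ∈ Δ, F.card ≤ d) ∧ ∃ F ∈ Δ, F.card = d

/-- `Δ` has frame dimension `c - 1`, i.e. `c` is the largest integer such that
every `c`-subset of `[n]` is a face of `Δ`. -/
def IsFrame (Δ : Set (Finset (Fin n))) (c : ℕ) : Prop :=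
  (∀ F : Finset (Fin n), F.card ≤ c → F ∈ Δ) ∧
    ∃ F : Finset (Fin n), F.card = c + 1 ∧ F ∉ Δ

/-- A facet: a maximal face. -/
def IsFacet (Δ : Set (Finset (Fin n))) (F : Finset (Fin n)) : Prop :=
  F ∈ Δ ∧ ∀ G ∈ Δ, F ⊆ G → F = G


/-! ### Auxiliary lemmas -/

lemma boundary_apply (Δ : Set (Finset (Fin n))) (p : ℤ) (f : Chains k Δ p) :
    boundary k Δ p f = boundaryFun k Δ p f := rfl

lemma chainsCongr_apply (Δ : Set (Finset (Fin n))) {p q : ℤ} (h : p = q)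
    (f : Chains k Δ p) (G : {F : Finset (Fin n) // F ∈ Δ ∧ (F.card : ℤ) = q + 1}) :
    chainsCongr k Δ h f G = f ⟨G.1, G.2.1, by rw [h]; exact G.2.2⟩ := by
  subst h; rfl

lemma chains_congr_arg {Δ : Set (Finset (Fin n))} {p : ℤ} (g : Chains k Δ p)
    {F G : Finset (Fin n)} (h : F = G) {h1 : F ∈ Δ ∧ (F.card : ℤ) = p + 1}
    {h2 : G ∈ Δ ∧ (G.card : ℤ) = p + 1} : g ⟨F, h1⟩ = g ⟨G, h2⟩ := by
  subst h; rfl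

lemma subsingleton_iff_le (Δ : Set (Finset (Fin n))) (p : ℤ) :
    Subsingleton (ReducedHomology k Δ p) ↔ cycles k Δ p ≤ boundaries k Δ p := by
  rw [Submodule.Quotient.subsingleton_iff, Submodule.eq_top_iff']
  constructor
  · intro h f hf
    have := h ⟨f, hf⟩
    rwa [Submodule.mem_comap, Submodule.subtype_apply] at this
  · intro h x
    rw [Submodule.mem_comap, Submodule.subtype_apply]
    exact h x.2

lemma exists_facet {Δ : Set (Finset (Fin n))} (hΔ : IsComplex Δ) {F : Finset (Fin n)}
    (hF : F ∈ Δ) : ∃ M, IsFacet Δ M ∧ F ⊆ M := by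
  have main : ∀ (m : ℕ) (F : Finset (Fin n)), F ∈ Δ → n ≤ F.card + m →
      ∃ M, IsFacet Δ M ∧ F ⊆ M := by
    intro m
    induction m with
    | zero =>
      intro F hF hle
      refine ⟨F, ⟨hF, fun G hG hFG => ?_⟩, subset_rfl⟩
      refine Finset.eq_of_subset_of_card_le hFG ?_
      have hG' := G.card_le_univ
      simp only [Finset.card_univ, Fintype.card_fin] at hG'
      omega
    | succ m ih =>
      intro F hF hle
      by_cases hfac : ∀ G ∈ Δ, F ⊆ G → F = G
      · exact ⟨F, ⟨hF, hfac⟩, subset_rfl⟩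
      · push_neg at hfac
        obtain ⟨G, hG, hFG, hne⟩ := hfac
        have hlt : F.card < G.card := Finset.card_lt_card (hFG.ssubset_of_ne hne)
        obtain ⟨M, hM, hGM⟩ := ih G hG (by omega)
        exact ⟨M, hM, hFG.trans hGM⟩
  have hcard := F.card_le_univ
  simp only [Finset.card_univ, Fintype.card_fin] at hcard
  exact main n F hF (by omega)

lemma link_isComplex {Δ : Set (Finset (Fin n))} (hΔ : IsComplex Δ) (S : Finset (Fin n)) :
    IsComplex (link Δ S) := by
  intro F hF G hGF
  exact ⟨Finset.disjoint_of_subset_left hGF hF.1,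
    hΔ _ hF.2 _ (Finset.union_subset_union_left hGF)⟩

lemma cross {α : Type*} {r : α → α → Prop} {P : α → Prop} {x y : α}
    (h : Relation.ReflTransGen r x y) (hx : P x) (hy : ¬ P y) :
    ∃ u w, P u ∧ ¬ P w ∧ r u w := by
  revert hy
  induction h with
  | refl => exact fun hy => absurd hx hy
  | @tail b c _ hbc ih =>
    intro hy
    by_cases hb : P b
    · exact ⟨b, c, hb, hy, hbc⟩
    · exact ih hb

open Classical in
/-- Value of a `0`-chain on a finset (zero if it is not a vertex). -/
noncomputable def fval (Δ : Set (Finset (Fin n))) (f : Chains k Δ 0)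
    (F : Finset (Fin n)) : k :=
  if h : F ∈ Δ ∧ (F.card : ℤ) = 0 + 1 then f ⟨F, h⟩ else 0

open Classical in
/-- Cone chain used to fill a `0`-cycle when all vertices are joined to `v₀`. -/
noncomputable def gfun (Δ : Set (Finset (Fin n))) (f : Chains k Δ 0) (v₀ : Fin n) :
    Chains k Δ (0 + 1) := fun E =>
  if v₀ ∈ E.1 then
    (-1 : k) ^ ((E.1.erase v₀).filter (fun y => y < v₀)).card * fval k Δ f (E.1.erase v₀)
  else 0

lemma sum_fval_eq_zero (Δ : Set (Finset (Fin n))) (f : Chains k Δ 0)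
    (hf : boundary k Δ 0 f = 0) (h0 : (∅ : Finset (Fin n)) ∈ Δ) :
    ∑ z : Fin n, fval k Δ f {z} = 0 := by
  have h := congrFun hf (⟨∅, h0, by norm_num⟩ :
    {F : Finset (Fin n) // F ∈ Δ ∧ (F.card : ℤ) = 0 - 1 + 1})
  rw [boundary_apply, Pi.zero_apply] at h
  rw [← h]
  simp only [boundaryFun]
  refine Finset.sum_congr rfl fun z _ => ?_
  simp only [fval]
  by_cases hz : ({z} : Finset (Fin n)) ∈ Δ
  · rw [dif_pos ⟨hz, by simp⟩,
      dif_pos (show z ∉ (∅ : Finset (Fin n)) ∧ insert z (∅ : Finset (Fin n)) ∈ Δ from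
        ⟨Finset.notMem_empty z, hz⟩)]
    simp
  · rw [dif_neg, dif_neg]
    · exact fun hc => hz hc.2
    · exact fun hc => hz hc.1

lemma gfun_spec (Δ : Set (Finset (Fin n))) (hC : IsComplex Δ)
    (hpair : ∀ x y : Fin n, ({x} : Finset (Fin n)) ∈ Δ → ({y} : Finset (Fin n)) ∈ Δ →
      ({x, y} : Finset (Fin n)) ∈ Δ)
    (f : Chains k Δ 0) (hf : boundary k Δ 0 f = 0)
    (v₀ : Fin n) (hv₀ : ({v₀} : Finset (Fin n)) ∈ Δ)
    (x : Fin n) (hx : ({x} : Finset (Fin n)) ∈ Δ)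
    (pf1 : ((({x} : Finset (Fin n)).card : ℤ)) = 0 + 1 - 1 + 1)
    (pf2 : ((({x} : Finset (Fin n)).card : ℤ)) = 0 + 1) :
    boundaryFun k Δ (0+1) (gfun k Δ f v₀) ⟨{x}, hx, pf1⟩ = f ⟨{x}, hx, pf2⟩ := by
  have hzero : (∅ : Finset (Fin n)) ∈ Δ := hC _ hv₀ _ (Finset.empty_subset _)
  have hsum := sum_fval_eq_zero k Δ f hf hzero
  simp only [boundaryFun]
  by_cases hxv : x = v₀
  · subst hxv
    trans (∑ z : Fin n, ((if z = x then fval k Δ f {z} else 0) - fval k Δ f {z}))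
    · refine Finset.sum_congr rfl fun z _ => ?_
      by_cases hzx : z = x
      · subst hzx
        rw [if_pos rfl, sub_self, dif_neg]
        exact fun hc => hc.1 (Finset.mem_singleton_self z)
      · rw [if_neg hzx, zero_sub]
        have h1 : z ∉ ({x} : Finset (Fin n)) := Finset.notMem_singleton.mpr hzx
        by_cases hedge : insert z ({x} : Finset (Fin n)) ∈ Δ
        · have herase : (insert z ({x} : Finset (Fin n))).erase x = {z} := by
            rw [show insert z ({x} : Finset (Fin n)) = insert x {z} from Finset.pair_comm z x]
            exact Finset.erase_insert (Finset.notMem_singleton.mpr (Ne.symm hzx))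
          rw [dif_pos ⟨h1, hedge⟩]
          simp only [gfun]
          rw [if_pos (Finset.mem_insert_of_mem (Finset.mem_singleton_self x)), herase]
          rw [Finset.filter_singleton, Finset.filter_singleton]
          rcases lt_or_gt_of_ne hzx with h | h
          · rw [if_neg (asymm h), if_pos h]
            simp
          · rw [if_pos h, if_neg (asymm h)]
            simp
        · rw [dif_neg]
          · have hz0 : fval k Δ f {z} = 0 := by
              simp only [fval]
              rw [dif_neg]
              exact fun hc => hedge (hpair z x hc.1 hx)
            rw [hz0, neg_zero]
          · exact fun hc => hedge hc.2
    · rw [Finset.sum_sub_distrib,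
        Finset.sum_ite_eq' Finset.univ x (fun z => fval k Δ f {z}),
        if_pos (Finset.mem_univ x), hsum, sub_zero]
      simp only [fval]
      rw [dif_pos ⟨hx, pf2⟩]
  · rw [Finset.sum_eq_single_of_mem v₀ (Finset.mem_univ v₀)]
    · have h1 : v₀ ∉ ({x} : Finset (Fin n)) := Finset.notMem_singleton.mpr (Ne.symm hxv)
      rw [dif_pos ⟨h1, hpair v₀ x hv₀ hx⟩]
      simp only [gfun]
      rw [if_pos (Finset.mem_insert_self v₀ {x}), Finset.erase_insert h1]
      rw [← mul_assoc, ← pow_add, Even.neg_one_pow ⟨_, rfl⟩, one_mul]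
      simp only [fval]
      rw [dif_pos ⟨hx, pf2⟩]
    · intro b _ hb
      by_cases hcond : b ∉ ({x} : Finset (Fin n)) ∧ insert b ({x} : Finset (Fin n)) ∈ Δ
      · rw [dif_pos hcond]
        simp only [gfun]
        rw [if_neg, mul_zero]
        intro hmem
        rcases Finset.mem_insert.mp hmem with h | h
        · exact hb h.symm
        · exact hxv (Finset.mem_singleton.mp h).symm
      · rw [dif_neg hcond]

lemma lemA (Δ : Set (Finset (Fin n))) (hC : IsComplex Δ)
    (hpair : ∀ x y : Fin n, ({x} : Finset (Fin n)) ∈ Δ → ({y} : Finset (Fin n)) ∈ Δ →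
      ({x, y} : Finset (Fin n)) ∈ Δ) :
    Subsingleton (ReducedHomology k Δ 0) := by
  rw [subsingleton_iff_le]
  intro f hf
  simp only [cycles, LinearMap.mem_ker] at hf
  simp only [boundaries, LinearMap.mem_range]
  by_cases hex : ∃ v : Fin n, ({v} : Finset (Fin n)) ∈ Δ
  · obtain ⟨v₀, hv₀⟩ := hex
    refine ⟨gfun k Δ f v₀, ?_⟩
    funext G
    obtain ⟨F, hmem, hcard⟩ := G
    have hc1 : F.card = 1 := by push_cast at hcard; omega
    obtain ⟨x, rfl⟩ := Finset.card_eq_one.mp hc1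
    rw [LinearMap.comp_apply, LinearEquiv.coe_coe, chainsCongr_apply, boundary_apply]
    exact gfun_spec k Δ hC hpair f hf v₀ hv₀ x hmem (by rw [hc1]; norm_num) hcard
  · refine ⟨0, ?_⟩
    rw [map_zero]
    funext G
    obtain ⟨F, hmem, hcard⟩ := G
    exfalso
    have hc1 : F.card = 1 := by push_cast at hcard; omega
    obtain ⟨x, rfl⟩ := Finset.card_eq_one.mp hc1
    exact hex ⟨x, hmem⟩

/-- Edge relation of a complex. -/
def eRel (Δ : Set (Finset (Fin n))) (a b : Fin n) : Prop :=
  a ≠ b ∧ ({a, b} : Finset (Fin n)) ∈ Δ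

open Classical in
/-- Difference of two vertex delta chains. -/
noncomputable def deltaF (Δ : Set (Finset (Fin n))) (x y : Fin n) : Chains k Δ 0 :=
  fun G => (if G.1 = {x} then (1 : k) else 0) - (if G.1 = {y} then (1 : k) else 0)

lemma deltaF_cycle (Δ : Set (Finset (Fin n))) (x y : Fin n)
    (hx : ({x} : Finset (Fin n)) ∈ Δ) (hy : ({y} : Finset (Fin n)) ∈ Δ) :
    boundary k Δ 0 (deltaF k Δ x y) = 0 := by
  funext G
  obtain ⟨F, hmem, hcard⟩ := G
  have hF : F = ∅ := Finset.card_eq_zero.mp (by push_cast at hcard; omega)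
  subst hF
  rw [boundary_apply, Pi.zero_apply]
  simp only [boundaryFun]
  trans (∑ z : Fin n, ((if z = x then (1:k) else 0) - (if z = y then (1:k) else 0)))
  · refine Finset.sum_congr rfl fun z _ => ?_
    by_cases hz : ({z} : Finset (Fin n)) ∈ Δ
    · rw [dif_pos (show z ∉ (∅ : Finset (Fin n)) ∧ insert z (∅ : Finset (Fin n)) ∈ Δ from
        ⟨Finset.notMem_empty z, hz⟩)]
      simp only [deltaF]
      simp [Finset.singleton_inj]
    · rw [dif_neg (fun hc => hz hc.2)]
      have hzx : z ≠ x := fun h => hz (h ▸ hx)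
      have hzy : z ≠ y := fun h => hz (h ▸ hy)
      simp [hzx, hzy]
  · rw [Finset.sum_sub_distrib,
      Finset.sum_ite_eq' Finset.univ x (fun _ => (1:k)),
      Finset.sum_ite_eq' Finset.univ y (fun _ => (1:k)),
      if_pos (Finset.mem_univ x), if_pos (Finset.mem_univ y), sub_self]

open Classical in
/-- The summand in the double-counting argument. -/
noncomputable def pairF (Δ : Set (Finset (Fin n))) (g : Chains k Δ (0 + 1)) (x : Fin n)
    (p : Fin n × Fin n) : k :=
  if _hz : ({p.1} : Finset (Fin n)) ∈ Δ ∧ Relation.ReflTransGen (eRel Δ) x p.1 then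
    if hw : p.2 ∉ ({p.1} : Finset (Fin n)) ∧ insert p.2 {p.1} ∈ Δ then
      (-1 : k) ^ ((({p.1} : Finset (Fin n)).filter (fun y => y < p.2)).card) *
        g ⟨insert p.2 {p.1}, hw.2, by
          rw [Finset.card_insert_of_notMem hw.1, Finset.card_singleton]
          norm_num⟩
    else 0
  else 0

lemma pairF_sum_zero (Δ : Set (Finset (Fin n))) (hC : IsComplex Δ)
    (g : Chains k Δ (0 + 1)) (x : Fin n) :
    ∑ p ∈ Finset.univ ×ˢ Finset.univ, pairF k Δ g x p = 0 := by
  refine Finset.sum_involution (fun p _ => p.swap) ?_ ?_ (fun p _ => Finset.mem_univ _)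
    (fun p _ => Prod.swap_swap p)
  · rintro ⟨z, w⟩ -
    show pairF k Δ g x (z, w) + pairF k Δ g x (w, z) = 0
    by_cases hedge : z ≠ w ∧ ({z, w} : Finset (Fin n)) ∈ Δ
    · obtain ⟨hne, hzw⟩ := hedge
      have hz1 : ({z} : Finset (Fin n)) ∈ Δ := hC _ hzw _ (by simp)
      have hw1 : ({w} : Finset (Fin n)) ∈ Δ := hC _ hzw _ (by
        simp [Finset.singleton_subset_iff])
      have hwz : ({w, z} : Finset (Fin n)) ∈ Δ := by rwa [Finset.pair_comm]
      have hr1 : Relation.ReflTransGen (eRel Δ) x z ↔ Relation.ReflTransGen (eRel Δ) x w :=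
        ⟨fun h => h.tail ⟨hne, hzw⟩, fun h => h.tail ⟨hne.symm, hwz⟩⟩
      simp only [pairF]
      by_cases hrz : Relation.ReflTransGen (eRel Δ) x z
      · rw [dif_pos ⟨hz1, hrz⟩, dif_pos ⟨Finset.notMem_singleton.mpr hne.symm, hwz⟩,
          dif_pos ⟨hw1, hr1.mp hrz⟩, dif_pos ⟨Finset.notMem_singleton.mpr hne, hzw⟩]
        rw [chains_congr_arg k g (Finset.pair_comm w z)]
        rw [Finset.filter_singleton, Finset.filter_singleton]
        rcases lt_or_gt_of_ne hne with h | h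
        · rw [if_pos h, if_neg (asymm h)]
          simp
        · rw [if_neg (asymm h), if_pos h]
          simp
        · refine ⟨hzw, ?_⟩
          rw [Finset.card_insert_of_notMem (Finset.notMem_singleton.mpr hne),
            Finset.card_singleton]
          norm_num
      · rw [dif_neg, dif_neg, add_zero]
        · exact fun hc => hrz (hr1.mpr hc.2)
        · exact fun hc => hrz hc.2
    · have hz0 : ∀ a b : Fin n, ¬(a ≠ b ∧ ({a, b} : Finset (Fin n)) ∈ Δ) →
          pairF k Δ g x (a, b) = 0 := by
        intro a b hab
        simp only [pairF]
        by_cases houter : ({a} : Finset (Fin n)) ∈ Δ ∧ Relation.ReflTransGen (eRel Δ) x a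
        · rw [dif_pos houter, dif_neg]
          intro hcond
          refine hab ⟨fun h => hcond.1 (by rw [h]; exact Finset.mem_singleton_self b), ?_⟩
          have h2 := hcond.2
          rwa [Finset.pair_comm b a] at h2
        · rw [dif_neg houter]
      rw [hz0 z w hedge, hz0 w z (fun h => hedge ⟨h.1.symm, by
        rw [Finset.pair_comm z w]; exact h.2⟩), add_zero]
  · rintro ⟨z, w⟩ - hne
    intro heq
    have hwz : w = z := (Prod.ext_iff.mp heq).1
    apply hne
    subst hwz
    simp only [pairF]
    by_cases houter : ({w} : Finset (Fin n)) ∈ Δ ∧ Relation.ReflTransGen (eRel Δ) x w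
    · rw [dif_pos houter, dif_neg]
      exact fun hc => hc.1 (Finset.mem_singleton_self w)
    · rw [dif_neg houter]

lemma lemB (Δ : Set (Finset (Fin n))) (hC : IsComplex Δ)
    (hs : Subsingleton (ReducedHomology k Δ 0)) {x y : Fin n}
    (hx : ({x} : Finset (Fin n)) ∈ Δ) (hy : ({y} : Finset (Fin n)) ∈ Δ) :
    Relation.ReflTransGen (eRel Δ) x y := by
  by_contra hreach
  have hxy : x ≠ y := fun h => hreach (h ▸ Relation.ReflTransGen.refl)
  have hcyc : deltaF k Δ x y ∈ cycles k Δ 0 := by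
    simp only [cycles, LinearMap.mem_ker]
    exact deltaF_cycle k Δ x y hx hy
  have hmem := (subsingleton_iff_le k Δ 0).mp hs hcyc
  simp only [boundaries, LinearMap.mem_range] at hmem
  obtain ⟨g, hg⟩ := hmem
  have hval : ∀ (z : Fin n) (hz : ({z} : Finset (Fin n)) ∈ Δ)
      (pf1 : ((({z} : Finset (Fin n)).card : ℤ)) = 0 + 1 - 1 + 1)
      (pf2 : ((({z} : Finset (Fin n)).card : ℤ)) = 0 + 1),
      boundaryFun k Δ (0+1) g ⟨{z}, hz, pf1⟩ = deltaF k Δ x y ⟨{z}, hz, pf2⟩ := by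
    intro z hz pf1 pf2
    have h := congrFun hg ⟨{z}, hz, pf2⟩
    rw [LinearMap.comp_apply, LinearEquiv.coe_coe, chainsCongr_apply, boundary_apply] at h
    exact h
  have h1 : ∑ p ∈ Finset.univ ×ˢ Finset.univ, pairF k Δ g x p = 1 := by
    rw [Finset.sum_product]
    trans (∑ z : Fin n, if z = x then (1:k) else 0)
    · refine Finset.sum_congr rfl fun z _ => ?_
      by_cases houter : ({z} : Finset (Fin n)) ∈ Δ ∧ Relation.ReflTransGen (eRel Δ) x z
      · have hbd : ∑ w : Fin n, pairF k Δ g x (z, w)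
            = boundaryFun k Δ (0+1) g ⟨{z}, houter.1, by
                rw [Finset.card_singleton]; norm_num⟩ := by
          simp only [pairF, boundaryFun]
          refine Finset.sum_congr rfl fun w _ => ?_
          rw [dif_pos houter]
        rw [hbd, hval z houter.1 (by rw [Finset.card_singleton]; norm_num)
          (by rw [Finset.card_singleton]; norm_num)]
        simp only [deltaF]
        by_cases hzx : z = x
        · subst hzx
          simp [Finset.singleton_inj, hxy]
        · have hzy : z ≠ y := fun h => hreach (h ▸ houter.2)
          simp [Finset.singleton_inj, hzx, hzy]
      · have hallz : ∀ w : Fin n, pairF k Δ g x (z, w) = 0 := fun w => by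
          simp only [pairF]; rw [dif_neg houter]
        have hzx : z ≠ x := fun h => houter (by
          subst h; exact ⟨hx, Relation.ReflTransGen.refl⟩)
        rw [Finset.sum_congr rfl (fun w _ => hallz w), Finset.sum_const_zero, if_neg hzx]
    · rw [Finset.sum_ite_eq' Finset.univ x (fun _ => (1:k)), if_pos (Finset.mem_univ x)]
  rw [pairF_sum_zero k Δ hC g x] at h1
  exact zero_ne_one h1

lemma backward_aux (Δ : Set (Finset (Fin n))) (hΔ : IsComplex Δ) (c : ℕ)
    (hH : ∀ S ∈ Δ, c ≤ S.card → Subsingleton (ReducedHomology k (link Δ S) (0 : ℤ))) :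
    ∀ j : ℕ, ∀ F G : Finset (Fin n), IsFacet Δ F → IsFacet Δ G → F ≠ G →
      c ≤ (F ∩ G).card → n - (F ∩ G).card ≤ j → False := by
  intro j
  induction j with
  | zero =>
    intro F G hF hG hne hc hj
    have h1 := (F ∩ G).card_le_univ
    simp only [Finset.card_univ, Fintype.card_fin] at h1
    have h2 : (F ∩ G).card = n := by omega
    have h3 : F ∩ G = Finset.univ := (Finset.card_eq_iff_eq_univ _).mp (by
      rw [h2, Fintype.card_fin])
    have h4 : F = Finset.univ := Finset.eq_univ_of_forall (fun a => by
      have : a ∈ F ∩ G := h3 ▸ Finset.mem_univ a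
      exact (Finset.mem_inter.mp this).1)
    have h5 : G = Finset.univ := Finset.eq_univ_of_forall (fun a => by
      have : a ∈ F ∩ G := h3 ▸ Finset.mem_univ a
      exact (Finset.mem_inter.mp this).2)
    exact hne (h4.trans h5.symm)
  | succ j ih =>
    intro F G hF hG hne hc hj
    have hSF : F ∩ G ⊆ F := Finset.inter_subset_left
    have hSG : F ∩ G ⊆ G := Finset.inter_subset_right
    have hSΔ : F ∩ G ∈ Δ := hΔ F hF.1 _ hSF
    have hFG : ¬ F ⊆ G := fun h => hne (hF.2 G hG.1 h)
    obtain ⟨a, haF, haG⟩ := Finset.not_subset.mp hFG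
    have hGF : ¬ G ⊆ F := fun h => hne (hG.2 F hF.1 h).symm
    obtain ⟨b, hbG, hbF⟩ := Finset.not_subset.mp hGF
    have haS : a ∉ F ∩ G := fun h => haG (hSG h)
    have hbS : b ∉ F ∩ G := fun h => hbF (hSF h)
    have hxa : ({a} : Finset (Fin n)) ∈ link Δ (F ∩ G) :=
      ⟨Finset.disjoint_singleton_left.mpr haS,
        hΔ F hF.1 _ (Finset.union_subset (Finset.singleton_subset_iff.mpr haF) hSF)⟩
    have hxb : ({b} : Finset (Fin n)) ∈ link Δ (F ∩ G) :=
      ⟨Finset.disjoint_singleton_left.mpr hbS,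
        hΔ G hG.1 _ (Finset.union_subset (Finset.singleton_subset_iff.mpr hbG) hSG)⟩
    have hreach := lemB k (link Δ (F ∩ G)) (link_isComplex hΔ _)
      (hH _ hSΔ hc) hxa hxb
    obtain ⟨u, w, huF, hwF, hr⟩ := cross (P := fun v => v ∈ F) hreach haF hbF
    obtain ⟨hdisj, hmem⟩ := hr.2
    obtain ⟨H, hHf, hsubH⟩ := exists_facet hΔ hmem
    have hwH : w ∈ H := hsubH (Finset.mem_union_left _
      (Finset.mem_insert_of_mem (Finset.mem_singleton_self w)))
    have hHF : H ≠ F := fun h => hwF (h ▸ hwH)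
    have huS : u ∉ F ∩ G := Finset.disjoint_left.mp hdisj (Finset.mem_insert_self u {w})
    have huH : u ∈ H := hsubH (Finset.mem_union_left _ (Finset.mem_insert_self u {w}))
    have hsub2 : insert u (F ∩ G) ⊆ F ∩ H :=
      Finset.insert_subset (Finset.mem_inter.mpr ⟨huF, huH⟩)
        (Finset.subset_inter hSF ((Finset.subset_union_right).trans hsubH))
    have hcard : (F ∩ G).card + 1 ≤ (F ∩ H).card := by
      rw [← Finset.card_insert_of_notMem huS]
      exact Finset.card_le_card hsub2
    exact ih F H hF hHf (fun h => hHF h.symm) (by omega) (by omega)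

/-- any two distinct facets intersect in cardinality `< c` iff
`H̃_0(lk_Δ S) = 0` for all faces `S` with `|S| ≥ c`. -/
theorem stmt12 (k : Type) [Field k] {n : ℕ} (Δ : Set (Finset (Fin n)))
    (hΔ : IsComplex Δ) (c : ℕ) (hc : IsFrame Δ c) :
    (∀ F G : Finset (Fin n), IsFacet Δ F → IsFacet Δ G → F ≠ G →
        (F ∩ G).card < c) ↔
    (∀ S ∈ Δ, c ≤ S.card →
        Subsingleton (ReducedHomology k (link Δ S) (0 : ℤ))) := by
  constructor
  · intro hfac S hS hcS
    apply lemA k _ (link_isComplex hΔ S)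
    intro x y hx hy
    by_cases hxy : x = y
    · subst hxy
      rw [Finset.pair_eq_singleton]
      exact hx
    obtain ⟨Fx, hFx, hFxsub⟩ := exists_facet hΔ hx.2
    obtain ⟨Fy, hFy, hFysub⟩ := exists_facet hΔ hy.2
    have hSx : S ⊆ Fx := (Finset.subset_union_right).trans hFxsub
    have hSy : S ⊆ Fy := (Finset.subset_union_right).trans hFysub
    have hFeq : Fx = Fy := by
      by_contra hne
      have hlt := hfac Fx Fy hFx hFy hne
      have hsub : S ⊆ Fx ∩ Fy := Finset.subset_inter hSx hSy
      have := Finset.card_le_card hsub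
      omega
    refine ⟨?_, ?_⟩
    · rw [Finset.disjoint_left]
      intro a ha haS
      rcases Finset.mem_insert.mp ha with h | h
      · exact Finset.disjoint_singleton_left.mp hx.1 (h ▸ haS)
      · exact Finset.disjoint_singleton_left.mp hy.1
          ((Finset.mem_singleton.mp h) ▸ haS)
    · refine hΔ Fx hFx.1 _ (Finset.union_subset ?_ hSx)
      intro a ha
      rcases Finset.mem_insert.mp ha with h | h
      · exact h ▸ hFxsub (Finset.mem_union_left _ (Finset.mem_singleton_self x))
      · rw [Finset.mem_singleton.mp h, hFeq]
        exact hFysub (Finset.mem_union_left _ (Finset.mem_singleton_self y))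
  · intro hH F G hF hG hne
    by_contra hge
    push_neg at hge
    exact backward_aux k Δ hΔ c hH (n - (F ∩ G).card) F G hF hG hne hge le_rfl

end SCx
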